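/- Let D be a filter on a set I, N a first-order structure, λ = ‖N‖ + |τ(N)|, and Δ the set of atomic formulas of the language of N. Let 𝒯 be the reduced power (^{ω>}λ, ⊴)^I/D of the partial order of finite sequences from λ under the initial-segment relation ⊴, and let κ = min{𝔱(𝒯), 𝔭(𝒯)}. Then the reduced power N^I/D is (κ,1,Δ)-saturated. -/

import Mathlib

open FirstOrder Cardinal

namespace Shelah1064

/-! ### Reduced products of first-order structures with respect to a filter -/

def rpSetoid {I : Type*} (D : Filter I) (M : I → Type*) : Setoid (∀ i, M i) where
  r f g := ∀ᶠ i in D, f i = g i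
  iseqv := ⟨fun _ => Filter.Eventually.of_forall fun _ => rfl,
    fun h => h.mono fun _ e => e.symm,
    fun h₁ h₂ => h₂.mp (h₁.mono fun _ e₁ e₂ => e₁.trans e₂)⟩

/-- The reduced product `∏ᵢ Mᵢ / D`. -/
def RedProd {I : Type*} (D : Filter I) (M : I → Type*) : Type _ :=
  Quotient (rpSetoid D M)

noncomputable instance RedProd.instStructure {I : Type*} {L : Language} (D : Filter I)
    (M : I → Type*) [∀ i, L.Structure (M i)] : L.Structure (RedProd D M) where
  funMap F x := Quotient.mk (rpSetoid D M) fun i =>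
    Language.Structure.funMap F fun k => (Quotient.out (s := rpSetoid D M) (x k)) i
  RelMap r x := ∀ᶠ i in D,
    Language.Structure.RelMap r fun k => (Quotient.out (s := rpSetoid D M) (x k)) i

/-- The reduced power `M^I/D`. -/
abbrev RedPow {I : Type*} (D : Filter I) (M : Type*) : Type _ := RedProd D fun _ : I => M

/-- The lift of a binary relation to the reduced product: it holds of two classes iff it holds
`D`-eventually of representatives. -/
def rpLiftRel {I : Type*} (D : Filter I) {M : I → Type*} (r : ∀ i, M i → M i → Prop)
    (x y : RedProd D M) : Prop :=
  ∀ᶠ i in D, r i (Quotient.out (s := rpSetoid D M) x i) (Quotient.out (s := rpSetoid D M) y i)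

/-! ### Saturation for sets of formulas -/

/-- An instance of a formula `φ(x̄,ȳ)` (with `ȳ` of some finite length `m`) with
parameters from `N`. -/
abbrev FmlInst (L : Language) (ε : ℕ) (N : Type*) :=
  Σ m : ℕ, L.Formula (Fin ε ⊕ Fin m) × (Fin m → N)

/-- Realization of an instance `φ(x̄, b̄)` at the tuple `x̄`. -/
def RealizesInst {L : Language} {N : Type*} [L.Structure N] {ε : ℕ} (x : Fin ε → N)
    (q : FmlInst L ε N) : Prop :=
  q.2.1.Realize (Sum.elim x q.2.2)

/-- `N` is `(κ, ε, Δ)`-saturated: every set of fewer than `κ` instances of formulas from `Δ`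
(in a fixed `ε`-tuple of free variables `x̄`, with parameters from `N`) which is finitely
satisfiable in `N` is realized in `N`. -/
def TupSaturated {L : Language} (κ : Cardinal) (ε : ℕ)
    (Δ : Set (Σ m : ℕ, L.Formula (Fin ε ⊕ Fin m))) (N : Type*) [L.Structure N] : Prop :=
  ∀ p : Set (FmlInst L ε N),
    (∀ q ∈ p, (⟨q.1, q.2.1⟩ : Σ m : ℕ, L.Formula (Fin ε ⊕ Fin m)) ∈ Δ) →
    #p < κ →
    (∀ s ⊆ p, s.Finite → ∃ x : Fin ε → N, ∀ q ∈ s, RealizesInst x q) →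
    ∃ x : Fin ε → N, ∀ q ∈ p, RealizesInst x q

/-- `(κ, atomically)`-saturated: `(κ,1,Δ)`-saturated where `Δ` is the set of atomic formulas
`φ(x,ȳ)`. -/
def AtomSaturated {L : Language} (κ : Cardinal) (N : Type*) [L.Structure N] : Prop :=
  TupSaturated κ 1 {q : Σ m : ℕ, L.Formula (Fin 1 ⊕ Fin m) | q.2.IsAtomic} N

/-- A (finite) conjunction of atomic formulas. -/
inductive IsConjAtomic {L : Language} {α : Type*} : ∀ {n : ℕ}, L.BoundedFormula α n → Prop
  | of_isAtomic {n} {φ : L.BoundedFormula α n} : φ.IsAtomic → IsConjAtomic φ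
  | inf {n} {φ ψ : L.BoundedFormula α n} :
      IsConjAtomic φ → IsConjAtomic ψ → IsConjAtomic (φ ⊓ ψ)

/-! ### Pre-cuts and the cardinals 𝔱, 𝔭 of a set with a transitive reflexive relation -/

/-- The cofinality of a subset `C` w.r.t. the relation `le`: the least cardinality of a
subset of `C` cofinal in `C`. -/
noncomputable def cofin {T : Type*} (le : T → T → Prop) (C : Set T) : Cardinal :=
  sInf { κ | ∃ S : Set T, S ⊆ C ∧ (∀ a ∈ C, ∃ b ∈ S, le a b) ∧ #S = κ }

/-- `(C₁, C₂)` is a `(κ₁,κ₂)`-pre-cut for the relation `le`. -/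
def IsPreCut {T : Type*} (le : T → T → Prop) (C₁ C₂ : Set T) (κ₁ κ₂ : Cardinal) : Prop :=
  (∀ a ∈ C₁ ∪ C₂, ∀ b ∈ C₁ ∪ C₂, le a b ∨ le b a) ∧
  (∀ a ∈ C₁, ∀ b ∈ C₂, le a b) ∧
  (¬ ∃ c : T, (∀ a ∈ C₁, le a c) ∧ (∀ b ∈ C₂, le c b)) ∧
  cofin le C₁ = κ₁ ∧ cofin (fun a b => le b a) C₂ = κ₂

def HasPreCut {T : Type*} (le : T → T → Prop) (κ₁ κ₂ : Cardinal) : Prop :=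
  ∃ C₁ C₂ : Set T, IsPreCut le C₁ C₂ κ₁ κ₂

/-- `𝔭(𝒯)`: the least `κ₁ + κ₂` over all `(κ₁,κ₂)`-pre-cuts with `κ₁, κ₂` infinite regular. -/
noncomputable def pCard {T : Type*} (le : T → T → Prop) : Cardinal :=
  sInf { κ | ∃ κ₁ κ₂ : Cardinal, κ₁.IsRegular ∧ κ₂.IsRegular ∧
    HasPreCut le κ₁ κ₂ ∧ κ = κ₁ + κ₂ }

/-- `𝔱(𝒯)`: the least infinite `κ` such that some strictly `le`-increasing `κ`-sequence
has no upper bound. -/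
noncomputable def tCard {T : Type*} (le : T → T → Prop) : Cardinal :=
  sInf { κ | ℵ₀ ≤ κ ∧ ∃ f : κ.ord.ToType → T,
    (∀ i j, i < j → le (f i) (f j) ∧ ¬ le (f j) (f i)) ∧ ¬ ∃ ub, ∀ i, le (f i) ub }


/-! ### Part 1 : generic reduced-power lemmas -/

section Basics

variable {I : Type*} {D : Filter I}

/-- Coordinates of (a chosen representative of) an element of a reduced power. -/
noncomputable def rpo {β : Type*} (D : Filter I) (x : RedPow D β) (i : I) : β :=
  Quotient.out (s := rpSetoid D fun _ : I => β) x i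

/-- The class of a function in a reduced power. -/
def rpmk {β : Type*} (D : Filter I) (g : I → β) : RedPow D β :=
  Quotient.mk (rpSetoid D fun _ : I => β) g

lemma rpo_rpmk {β : Type*} (g : I → β) : ∀ᶠ i in D, rpo D (rpmk D g) i = g i :=
  Quotient.mk_out (s := rpSetoid D fun _ : I => β) g

lemma rp_eq_iff {β : Type*} {x y : RedPow D β} :
    x = y ↔ ∀ᶠ i in D, rpo D x i = rpo D y i := by
  constructor
  · rintro rfl; exact Filter.Eventually.of_forall fun _ => rfl
  · intro h
    have hx : Quotient.mk (rpSetoid D fun _ : I => β) (rpo D x) = x := Quotient.out_eq x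
    have hy : Quotient.mk (rpSetoid D fun _ : I => β) (rpo D y) = y := Quotient.out_eq y
    rw [← hx, ← hy]
    exact Quotient.sound h

lemma rpLiftRel_of_eventually {β : Type*} (r : β → β → Prop) {x y : RedPow D β}
    (h : ∀ᶠ i in D, r (rpo D x i) (rpo D y i)) :
    rpLiftRel D (fun _ : I => r) x y := h

lemma rpLiftRel_refl {β : Type*} (r : β → β → Prop) (hr : ∀ x, r x x) (x : RedPow D β) :
    rpLiftRel D (fun _ : I => r) x x :=
  Filter.Eventually.of_forall fun _ => hr _

lemma rpLiftRel_trans {β : Type*} (r : β → β → Prop)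
    (hr : ∀ {x y z}, r x y → r y z → r x z) {x y z : RedPow D β}
    (h₁ : rpLiftRel D (fun _ : I => r) x y) (h₂ : rpLiftRel D (fun _ : I => r) y z) :
    rpLiftRel D (fun _ : I => r) x z :=
  h₂.mp (h₁.mono fun _ a b => hr a b)

end Basics

/-! ### Part 2 : Łoś's theorem for atomic formulas in reduced powers -/

section Los

variable {L : Language} {I : Type*} {D : Filter I} {N : Type*} [L.Structure N]

lemma term_rpo {γ : Type*} (t : L.Term γ) (v : γ → RedPow D N) :
    ∀ᶠ i in D, rpo D (t.realize v) i = t.realize fun k => rpo D (v k) i := by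
  induction t with
  | var k => exact Filter.Eventually.of_forall fun _ => rfl
  | func F ts ih =>
    have h1 : (Language.Term.func F ts).realize v =
        rpmk D (fun i => Language.Structure.funMap F fun k => rpo D ((ts k).realize v) i) := rfl
    have h2 := rpo_rpmk (D := D)
      (fun i => Language.Structure.funMap F fun k => rpo D ((ts k).realize v) i)
    have h3 : ∀ᶠ i in D, ∀ k, rpo D ((ts k).realize v) i = (ts k).realize
        fun k' => rpo D (v k') i := Filter.eventually_all.2 ih
    filter_upwards [h2, h3] with i hi hk
    rw [h1, hi]
    simp only [Language.Term.realize]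
    congr 1
    funext k
    exact hk k

lemma rp_realize_atomic_iff {γ : Type*} {φ : L.Formula γ} (hφ : φ.IsAtomic)
    (v : γ → RedPow D N) :
    φ.Realize v ↔ ∀ᶠ i in D, φ.Realize fun k => rpo D (v k) i := by
  have helim : ∀ (i : I) (t : L.Term (γ ⊕ Fin 0)),
      (t.realize (Sum.elim (fun k => rpo D (v k) i) (default : Fin 0 → N))) =
      (t.realize fun k => rpo D ((Sum.elim v (default : Fin 0 → RedPow D N)) k) i) := by
    intro i t
    congr 1
    funext k
    rcases k with k | k
    · rfl
    · exact k.elim0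
  cases hφ with
  | equal t₁ t₂ =>
    have h1 := term_rpo (D := D) t₁ (Sum.elim v (default : Fin 0 → RedPow D N))
    have h2 := term_rpo (D := D) t₂ (Sum.elim v (default : Fin 0 → RedPow D N))
    show (Language.BoundedFormula.Realize _ v default) ↔ _
    rw [Language.BoundedFormula.realize_bdEqual, rp_eq_iff]
    apply Filter.eventually_congr
    filter_upwards [h1, h2] with i hi1 hi2
    show rpo D _ i = rpo D _ i ↔ Language.BoundedFormula.Realize _ _ default
    rw [Language.BoundedFormula.realize_bdEqual, hi1, hi2, helim i t₁, helim i t₂]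
  | rel R ts =>
    have h3 : ∀ᶠ i in D, ∀ k, rpo D ((ts k).realize (Sum.elim v default)) i = (ts k).realize
        fun k' => rpo D ((Sum.elim v (default : Fin 0 → RedPow D N)) k') i :=
      Filter.eventually_all.2 fun k => term_rpo (D := D) (ts k) _
    show (Language.BoundedFormula.Realize _ v default) ↔ _
    rw [Language.BoundedFormula.realize_rel]
    show (∀ᶠ i in D, Language.Structure.RelMap R fun k =>
        rpo D ((ts k).realize (Sum.elim v default)) i) ↔ _
    apply Filter.eventually_congr
    filter_upwards [h3] with i hi
    have : (fun k => rpo D ((ts k).realize (Sum.elim v default)) i) = fun k =>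
        (ts k).realize (Sum.elim (fun k' => rpo D (v k') i) (default : Fin 0 → N)) := by
      funext k
      rw [hi k, helim i (ts k)]
    rw [this, ← Language.BoundedFormula.realize_rel (R := R) (ts := ts)
      (v := fun k => rpo D (v k) i) (xs := default)]
    rfl

end Los


/-! ### Part 3 : coding finite sequences of "instances" as lists over an alphabet -/

section Coding

variable {A : Type*} {Inst : Type*}

/-- The code block of a single instance: each letter of its code word tagged with `a`,
terminated by `[b, b]`. -/
def block (a b : A) (code : Inst ↪ List A) (c : Inst) : List A :=
  ((code c).flatMap fun l => [a, l]) ++ [b, b]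

/-- Code of a finite sequence of instances. -/
def blocksOf (a b : A) (code : Inst ↪ List A) (L : List Inst) : List A :=
  (L.map (block a b code)).flatten

open scoped Classical in
/-- Greedy decoding of a list over `A` into a sequence of instances; stops at junk or
incomplete blocks. -/
noncomputable def dec (a b : A) (code : Inst ↪ List A) : List A → List A → List Inst
  | x :: y :: rest, acc =>
    if x = a then dec a b code rest (acc ++ [y])
    else if x = b ∧ y = b then
      (if h : ∃ c, code c = acc then h.choose :: dec a b code rest [] else [])
    else []
  | _, _ => []
termination_by l _ => l.length

variable (a b : A) (code : Inst ↪ List A)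

lemma blocksOf_append (L₁ L₂ : List Inst) :
    blocksOf a b code (L₁ ++ L₂) = blocksOf a b code L₁ ++ blocksOf a b code L₂ := by
  simp [blocksOf]

lemma blocksOf_prefix {L₁ L₂ : List Inst} (h : L₁ <+: L₂) :
    blocksOf a b code L₁ <+: blocksOf a b code L₂ := by
  obtain ⟨t, rfl⟩ := h
  rw [blocksOf_append]
  exact List.prefix_append _ _

variable (hab : a ≠ b)

lemma dec_pairs (w : List A) : ∀ (z acc : List A),
    dec a b code ((w.flatMap fun l => [a, l]) ++ z) acc = dec a b code z (acc ++ w) := by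
  induction w with
  | nil => intro z acc; simp
  | cons l w ih =>
    intro z acc
    have : ((l :: w).flatMap fun l => [a, l]) ++ z =
        a :: l :: ((w.flatMap fun l => [a, l]) ++ z) := by simp
    rw [this, dec, if_pos rfl, ih]
    simp

include hab in
lemma dec_block (c : Inst) (z : List A) :
    dec a b code (block a b code c ++ z) [] = c :: dec a b code z [] := by
  have : block a b code c ++ z = ((code c).flatMap fun l => [a, l]) ++ ([b, b] ++ z) := by
    simp [block]
  rw [this, dec_pairs]
  simp only [List.cons_append, List.nil_append]
  rw [dec, if_neg (fun h => hab h.symm), if_pos ⟨rfl, rfl⟩]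
  have hex : ∃ c', code c' = code c := ⟨c, rfl⟩
  rw [dif_pos hex]
  congr 1
  have := hex.choose_spec
  apply code.injective
  simpa using this

include hab in
lemma dec_blocksOf_append (L : List Inst) (z : List A) :
    dec a b code (blocksOf a b code L ++ z) [] = L ++ dec a b code z [] := by
  induction L with
  | nil => simp [blocksOf]
  | cons c L ih =>
    have : blocksOf a b code (c :: L) ++ z = block a b code c ++ (blocksOf a b code L ++ z) := by
      simp [blocksOf]
    rw [this, dec_block a b code hab, ih]
    rfl

include hab in
lemma dec_blocksOf (L : List Inst) : dec a b code (blocksOf a b code L) [] = L := by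
  have := dec_blocksOf_append a b code hab L []
  simpa [dec] using this

lemma dec_prefix_of_append : ∀ (l z acc : List A),
    dec a b code l acc <+: dec a b code (l ++ z) acc
  | [], z, acc => by
    have h1 : dec a b code [] acc = [] := by simp [dec]
    rw [h1]; exact List.nil_prefix
  | [x], z, acc => by
    have h1 : dec a b code [x] acc = [] := by simp [dec]
    rw [h1]; exact List.nil_prefix
  | x :: y :: rest, z, acc => by
    have hl : (x :: y :: rest) ++ z = x :: y :: (rest ++ z) := rfl
    rw [hl, dec, dec]
    by_cases hx : x = a
    · rw [if_pos hx, if_pos hx]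
      exact dec_prefix_of_append rest z (acc ++ [y])
    · rw [if_neg hx, if_neg hx]
      by_cases hby : x = b ∧ y = b
      · rw [if_pos hby, if_pos hby]
        by_cases h : ∃ c, code c = acc
        · rw [dif_pos h, dif_pos h]
          exact List.cons_prefix_cons.mpr ⟨rfl, dec_prefix_of_append rest z []⟩
        · rw [dif_neg h, dif_neg h]
      · rw [if_neg hby, if_neg hby]
termination_by l _ _ => l.length

lemma dec_prefix {l₁ l₂ : List A} (h : l₁ <+: l₂) (acc : List A) :
    dec a b code l₁ acc <+: dec a b code l₂ acc := by
  obtain ⟨z, rfl⟩ := h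
  exact dec_prefix_of_append a b code l₁ z acc

end Coding


/-! ### Part 4 : order-theoretic lemmas about `cofin` and pre-cuts -/

section OrderLemmas

variable {T : Type*} {le : T → T → Prop}
variable (hrefl : ∀ x, le x x) (htrans : ∀ {x y z}, le x y → le y z → le x z)

include hrefl in
lemma cofin_le_mk (C : Set T) : cofin le C ≤ #C :=
  csInf_le' ⟨C, subset_rfl, fun c hc => ⟨c, hc, hrefl c⟩, rfl⟩

include htrans in
lemma finset_chain_top (s : Finset T) (hne : s.Nonempty)
    (hlin : ∀ x ∈ s, ∀ y ∈ s, le x y ∨ le y x) :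
    ∃ b ∈ s, ∀ x ∈ s, le x b := by
  induction hne using Finset.Nonempty.cons_induction with
  | singleton x =>
    rcases hlin x (by simp) x (by simp) with h | h <;>
      exact ⟨x, by simp, fun y hy => by simp at hy; subst hy; exact h⟩
  | cons x s hx hs ih =>
    obtain ⟨b, hb, htop⟩ := ih fun u hu v hv =>
      hlin u (Finset.mem_cons_of_mem hu) v (Finset.mem_cons_of_mem hv)
    rcases hlin x (Finset.mem_cons_self _ _) b (Finset.mem_cons_of_mem hb) with h | h
    · refine ⟨b, Finset.mem_cons_of_mem hb, fun y hy => ?_⟩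
      rcases Finset.mem_cons.1 hy with rfl | hy
      · exact h
      · exact htop y hy
    · refine ⟨x, Finset.mem_cons_self _ _, fun y hy => ?_⟩
      rcases Finset.mem_cons.1 hy with rfl | hy
      · rcases hlin y (Finset.mem_cons_self _ _) y (Finset.mem_cons_self _ _) with h' | h' <;>
          exact h'
      · exact htrans (htop y hy) h

include hrefl htrans in
/-- Lemma A: the minimal cardinality of a cofinal subset of a linearly preordered set
without a maximum is an infinite regular cardinal. -/
lemma cofin_isRegular {C : Set T} (hne : C.Nonempty)
    (hlin : ∀ x ∈ C, ∀ y ∈ C, le x y ∨ le y x)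
    (hnomax : ¬ ∃ b ∈ C, ∀ x ∈ C, le x b) :
    (cofin le C).IsRegular := by
  set Θ := {κ | ∃ S : Set T, S ⊆ C ∧ (∀ x ∈ C, ∃ y ∈ S, le x y) ∧ #S = κ} with hΘ
  have hΘne : Θ.Nonempty := ⟨#C, C, subset_rfl, fun c hc => ⟨c, hc, hrefl c⟩, rfl⟩
  have hmem : cofin le C ∈ Θ := csInf_mem hΘne
  obtain ⟨S, hSC, hScof, hScard⟩ := hmem
  set θ := cofin le C with hθdef
  have hθinf : ℵ₀ ≤ θ := by
    by_contra hfin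
    push_neg at hfin
    have hSfin : S.Finite := by
      rw [← Set.finite_coe_iff, ← Cardinal.lt_aleph0_iff_finite, hScard]
      exact hfin
    have hSne : S.Nonempty := by
      obtain ⟨c, hc⟩ := hne
      obtain ⟨y, hy, -⟩ := hScof c hc
      exact ⟨y, hy⟩
    obtain ⟨b, hb, htop⟩ := finset_chain_top (htrans := @htrans) hSfin.toFinset
      (by simpa using hSne)
      (fun x hx y hy => hlin x (hSC (hSfin.mem_toFinset.1 hx)) y (hSC (hSfin.mem_toFinset.1 hy)))
    refine hnomax ⟨b, hSC (hSfin.mem_toFinset.1 hb), fun x hx => ?_⟩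
    obtain ⟨y, hy, hxy⟩ := hScof x hx
    exact htrans hxy (htop y (hSfin.mem_toFinset.2 hy))
  refine ⟨hθinf, ?_⟩
  by_contra hcof
  push_neg at hcof
  haveI : IsWellOrder θ.ord.ToType (· < ·) := isWellOrder_lt
  obtain ⟨U, hUunb, hUcard⟩ := Order.exists_cof_eq θ.ord.ToType
  rw [Ordinal.cof_toType] at hUcard
  have hSeq : #S = #(θ.ord.ToType) := by rw [hScard, Cardinal.mk_ord_toType]
  obtain ⟨e⟩ := Cardinal.eq.1 hSeq
  have hslice : ∀ u : θ.ord.ToType, ∃ aᵤ ∈ C, ∀ s : S, e s ≤ u → ¬ le aᵤ (s : T) := by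
    intro u
    by_contra hcon
    push_neg at hcon
    set Sᵤ : Set T := {x | ∃ s : S, e s ≤ u ∧ (s : T) = x} with hSᵤ
    have hcard : #Sᵤ < θ := by
      have hinj : #Sᵤ ≤ #(Set.Iic u) := by
        refine Cardinal.mk_le_of_injective
          (f := fun x => ⟨e x.2.choose, x.2.choose_spec.1⟩) ?_
        intro x y h
        have h1 := x.2.choose_spec.2
        have h2 := y.2.choose_spec.2
        have he : (x.2.choose : S) = y.2.choose := e.injective (Subtype.ext_iff.1 h)
        apply Subtype.ext
        rw [← h1, ← h2, he]
      have h1 : #(Set.Iio u) < θ := by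
        have : #(Set.Iio u) = #{y : θ.ord.ToType // y < u} := rfl
        rw [this, ← Ordinal.card_typein (r := (· < ·)) u]
        exact Cardinal.lt_ord.1 ((Ordinal.typein_lt_type _ u).trans_eq
          (Ordinal.type_toType _))
      have h2 : #(Set.Iic u) ≤ #(Set.Iio u) + 1 := by
        rw [← Set.Iio_insert]
        exact Cardinal.mk_insert_le
      calc #Sᵤ ≤ #(Set.Iic u) := hinj
        _ ≤ #(Set.Iio u) + 1 := h2
        _ < θ := Cardinal.add_lt_of_lt hθinf h1 (Cardinal.one_lt_aleph0.trans_le hθinf)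
    have : θ ≤ #Sᵤ := by
      refine csInf_le' ⟨Sᵤ, ?_, ?_, rfl⟩
      · rintro x ⟨s, -, rfl⟩
        exact hSC s.2
      · intro x hx
        obtain ⟨s, hsu, hles⟩ := hcon x hx
        exact ⟨(s : T), ⟨s, hsu, rfl⟩, hles⟩
    exact absurd hcard (not_lt.2 this)
  choose aᵤ haC hadom using hslice
  have hAcof : ∀ x ∈ C, ∃ u : U, le x (aᵤ (u : θ.ord.ToType)) := by
    intro x hx
    obtain ⟨y, hy, hxy⟩ := hScof x hx
    obtain ⟨u, hu, hnlt⟩ := hUunb (e ⟨y, hy⟩)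
    have hle : e ⟨y, hy⟩ ≤ u := hnlt
    have hnd : ¬ le (aᵤ u) y := hadom u ⟨y, hy⟩ hle
    have hya : le y (aᵤ u) := by
      rcases hlin y (hSC hy) (aᵤ u) (haC u) with h | h
      · exact h
      · exact absurd h hnd
    exact ⟨⟨u, hu⟩, htrans hxy hya⟩
  have hsmall : θ ≤ #(Set.range fun u : U => aᵤ (u : θ.ord.ToType)) := by
    refine csInf_le' ⟨_, ?_, ?_, rfl⟩
    · rintro x ⟨u, rfl⟩
      exact haC u
    · intro x hx
      obtain ⟨u, hu⟩ := hAcof x hx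
      exact ⟨aᵤ (u : θ.ord.ToType), ⟨u, rfl⟩, hu⟩
  have : #(Set.range fun u : U => aᵤ (u : θ.ord.ToType)) ≤ θ.ord.cof := by
    rw [← hUcard]
    exact Cardinal.mk_range_le
  exact absurd (hsmall.trans this) (not_le.2 hcof)

include hrefl htrans in
/-- Lemma C: between a small chain and a small co-chain of upper bounds there is always a
middle element, provided there are no small pre-cuts. -/
lemma exists_middle {κ : Cardinal} (hκ : ℵ₀ ≤ κ)
    (hprecut : ∀ κ₁ κ₂ : Cardinal, κ₁.IsRegular → κ₂.IsRegular →
      HasPreCut le κ₁ κ₂ → κ ≤ κ₁ + κ₂)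
    {C₁ C₂ : Set T} (hne₁ : C₁.Nonempty) (hne₂ : C₂.Nonempty)
    (hlin : ∀ x ∈ C₁ ∪ C₂, ∀ y ∈ C₁ ∪ C₂, le x y ∨ le y x)
    (hcross : ∀ x ∈ C₁, ∀ y ∈ C₂, le x y)
    (hc₁ : #C₁ < κ) (hc₂ : #C₂ < κ) :
    ∃ c, (∀ x ∈ C₁, le x c) ∧ (∀ y ∈ C₂, le c y) := by
  by_contra hmid
  -- C₁ has no maximum
  have hnomax : ¬ ∃ b ∈ C₁, ∀ x ∈ C₁, le x b := by
    rintro ⟨b, hb, htop⟩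
    exact hmid ⟨b, htop, fun y hy => hcross b hb y hy⟩
  -- C₂ has no minimum
  have hnomin : ¬ ∃ b ∈ C₂, ∀ y ∈ C₂, le b y := by
    rintro ⟨b, hb, hbot⟩
    exact hmid ⟨b, fun x hx => hcross x hx b hb, hbot⟩
  have hlin₁ : ∀ x ∈ C₁, ∀ y ∈ C₁, le x y ∨ le y x := fun x hx y hy =>
    hlin x (Set.mem_union_left _ hx) y (Set.mem_union_left _ hy)
  have hlin₂ : ∀ x ∈ C₂, ∀ y ∈ C₂, (fun u v => le v u) x y ∨ (fun u v => le v u) y x :=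
    fun x hx y hy =>
      (hlin y (Set.mem_union_right _ hy) x (Set.mem_union_right _ hx))
  have hreg₁ : (cofin le C₁).IsRegular :=
    cofin_isRegular hrefl @htrans hne₁ hlin₁ hnomax
  have hreg₂ : (cofin (fun x y => le y x) C₂).IsRegular := by
    refine cofin_isRegular (le := fun x y => le y x) (fun x => hrefl x)
      (fun {x y z} h₁ h₂ => htrans h₂ h₁) hne₂ ?_ ?_
    · intro x hx y hy
      exact (hlin₂ x hx y hy)
    · rintro ⟨b, hb, hbot⟩
      exact hnomin ⟨b, hb, fun y hy => hbot y hy⟩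
  have hpc : HasPreCut le (cofin le C₁) (cofin (fun x y => le y x) C₂) := by
    refine ⟨C₁, C₂, hlin, hcross, ?_, rfl, rfl⟩
    rintro ⟨c, h₁, h₂⟩
    exact hmid ⟨c, h₁, h₂⟩
  have h := hprecut _ _ hreg₁ hreg₂ hpc
  have hb₁ : cofin le C₁ ≤ #C₁ := cofin_le_mk hrefl C₁
  have hb₂ : cofin (fun x y => le y x) C₂ ≤ #C₂ := cofin_le_mk (le := fun x y => le y x) (fun x => hrefl x) C₂
  have : cofin le C₁ + cofin (fun x y => le y x) C₂ < κ :=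
    Cardinal.add_lt_of_lt hκ (hb₁.trans_lt hc₁) (hb₂.trans_lt hc₂)
  exact absurd (h.trans_lt this) (lt_irrefl κ)

end OrderLemmas

/-! ### Part 5 : transfinite recursion with choice -/

section OrdRec

variable {T : Type*}

/-- Transfinite recursion: `ordRec F o = F o (earlier values)`. -/
noncomputable def ordRec (F : ∀ o : Ordinal, (∀ o' : Ordinal, o' < o → T) → T) : Ordinal → T :=
  WellFounded.fix (wellFounded_lt) (fun o ih => F o ih)

lemma ordRec_eq (F : ∀ o : Ordinal, (∀ o' : Ordinal, o' < o → T) → T) (o : Ordinal) :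
    ordRec F o = F o (fun o' _ => ordRec F o') :=
  WellFounded.fix_eq _ _ _

end OrdRec



/-! ### Part 6 : the pruning lemma (Lemma B) -/

section LemmaB

universe u

variable {T : Type u} [Nonempty T] {le : T → T → Prop}
variable (hrefl : ∀ x, le x x) (htrans : ∀ {x y z}, le x y → le y z → le x z)

include hrefl htrans in
/-- Lemma B: given a small chain `C`, a small family of requirements `G` which are
downward closed, hold on `C`, and can always be "pruned into" below any upper bound of `C`,
and given some upper bound of `C`, there is an upper bound of `C` satisfying all
requirements, provided there are no small pre-cuts. -/
lemma exists_fully_good_ub {κ : Cardinal.{u}} (hκ : ℵ₀ ≤ κ)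
    (hprecut : ∀ κ₁ κ₂ : Cardinal, κ₁.IsRegular → κ₂.IsRegular →
      HasPreCut le κ₁ κ₂ → κ ≤ κ₁ + κ₂)
    {C : Set T} (hCne : C.Nonempty)
    (hClin : ∀ x ∈ C, ∀ y ∈ C, le x y ∨ le y x) (hCcard : #C < κ)
    {W : Type u} (hWcard : #W < κ) (G : W → T → Prop)
    (hGdc : ∀ w {x y}, le x y → G w y → G w x)
    (s₀ : T) (hs₀ : ∀ c ∈ C, le c s₀)
    (hprune : ∀ (w : W) (s : T), (∀ c ∈ C, le c s) →
      ∃ s', le s' s ∧ (∀ c ∈ C, le c s') ∧ G w s') :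
    ∃ s, (∀ c ∈ C, le c s) ∧ ∀ w, G w s := by
  classical
  rcases isEmpty_or_nonempty W with hW | hW
  · exact ⟨s₀, hs₀, fun w => hW.elim w⟩
  set ν : Ordinal.{u} := (#W).ord with hν
  have hνtt : #(ν.ToType) = #W := Cardinal.mk_ord_toType _
  obtain ⟨e⟩ := Cardinal.eq.1 hνtt
  set enumW : Ordinal.{u} → W := fun o =>
    if h : o < ν then e ((Ordinal.ToType.mk (o := ν)) ⟨o, h⟩) else Classical.arbitrary W
    with henumW
  set rk : W → Ordinal.{u} := fun w => (((Ordinal.ToType.mk (o := ν)).symm (e.symm w)) : Ordinal)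
    with hrk
  have hrklt : ∀ w, rk w < ν := fun w => ((Ordinal.ToType.mk (o := ν)).symm (e.symm w)).2
  have henum_rk : ∀ w, enumW (rk w) = w := by
    intro w
    have h := hrklt w
    simp only [henumW, dif_pos h]
    have : (⟨rk w, h⟩ : Set.Iio ν) = (Ordinal.ToType.mk (o := ν)).symm (e.symm w) :=
      Subtype.ext rfl
    rw [this]
    simp
  -- the recursion
  set SpecB : ∀ (o : Ordinal.{u}), (∀ o' : Ordinal.{u}, o' < o → T) → T → Prop :=
    fun o ih x => (∀ o' (h' : o' < o), le x (ih o' h')) ∧ (∀ c ∈ C, le c x) ∧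
      (∀ o' (_ : o' < o), G (enumW o') x) with hSpecB
  set F : ∀ o : Ordinal.{u}, (∀ o' : Ordinal.{u}, o' < o → T) → T :=
    fun o ih => if h : ∃ x, SpecB o ih x then h.choose else Classical.arbitrary T with hF
  set g : Ordinal.{u} → T := ordRec F with hg
  have hgeq : ∀ o, g o = F o (fun o' _ => g o') := fun o => ordRec_eq F o
  -- the invariant holds for all `o ≤ ν`
  have hinv : ∀ o : Ordinal.{u}, o ≤ ν → SpecB o (fun o' _ => g o') (g o) := by
    intro o
    induction o using Ordinal.induction with
    | _ o IH => ?_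
    intro hoν
    have hex : ∃ x, SpecB o (fun o' _ => g o') x := by
      rcases Ordinal.zero_or_succ_or_isSuccLimit o with rfl | ⟨o', rfl⟩ | hlim
      · refine ⟨s₀, fun o' h' => absurd h' (zero_le : (0 : Ordinal) ≤ o').not_gt, hs₀,
          fun o' h' => absurd h' (zero_le : (0 : Ordinal) ≤ o').not_gt⟩
      · have ho' : o' < Order.succ o' := Order.lt_succ_of_not_isMax (not_isMax o')
        have hIH := IH o' ho' (le_of_lt (lt_of_lt_of_le ho' hoν))
        obtain ⟨s', hs'le, hs'ub, hs'G⟩ := hprune (enumW o') (g o') hIH.2.1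
        refine ⟨s', ?_, hs'ub, ?_⟩
        · intro o'' h''
          rcases lt_or_eq_of_le (Order.lt_succ_iff.1 h'') with h | rfl
          · exact htrans hs'le (hIH.1 o'' h)
          · exact hs'le
        · intro o'' h''
          rcases lt_or_eq_of_le (Order.lt_succ_iff.1 h'') with h | rfl
          · exact hGdc _ hs'le (hIH.2.2 o'' h)
          · exact hs'G
      · -- limit case: find a middle element below all previous stages
        set C₂ : Set T := Set.range (fun x : o.ToType =>
          g (((Ordinal.ToType.mk (o := o)).symm x) : Ordinal)) with hC₂
        have hC₂mem : ∀ y ∈ C₂, ∃ o' : Ordinal, o' < o ∧ y = g o' := by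
          rintro y ⟨x, rfl⟩
          exact ⟨_, ((Ordinal.ToType.mk (o := o)).symm x).2, rfl⟩
        have hmemC₂ : ∀ o' : Ordinal, o' < o → g o' ∈ C₂ := by
          intro o' h'
          exact ⟨(Ordinal.ToType.mk (o := o)) ⟨o', h'⟩, by simp⟩
        have hglel : ∀ o₁ o₂ : Ordinal, o₁ ≤ o₂ → o₂ < o → le (g o₂) (g o₁) := by
          intro o₁ o₂ h12 h2o
          rcases lt_or_eq_of_le h12 with h | rfl
          · exact (IH o₂ h2o (le_of_lt (lt_of_lt_of_le h2o hoν))).1 o₁ h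
          · exact hrefl _
        have hC₂ub : ∀ y ∈ C₂, ∀ c ∈ C, le c y := by
          intro y hy c hc
          obtain ⟨o', h', rfl⟩ := hC₂mem y hy
          exact (IH o' h' (le_of_lt (lt_of_lt_of_le h' hoν))).2.1 c hc
        have hmid : ∃ m, (∀ x ∈ C, le x m) ∧ (∀ y ∈ C₂, le m y) := by
          refine exists_middle hrefl @htrans hκ hprecut hCne
            ⟨g 0, hmemC₂ 0 hlim.pos⟩ ?_ (fun x hx y hy => hC₂ub y hy x hx) hCcard ?_
          · rintro x hx y hy
            rcases hx with hx | hx <;> rcases hy with hy | hy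
            · exact hClin x hx y hy
            · exact Or.inl (hC₂ub y hy x hx)
            · exact Or.inr (hC₂ub x hx y hy)
            · obtain ⟨o₁, h₁, rfl⟩ := hC₂mem x hx
              obtain ⟨o₂, h₂, rfl⟩ := hC₂mem y hy
              rcases le_total o₁ o₂ with h | h
              · exact Or.inr (hglel o₁ o₂ h h₂)
              · exact Or.inl (hglel o₂ o₁ h h₁)
          · calc #C₂ ≤ #(o.ToType) := Cardinal.mk_range_le
              _ = o.card := Cardinal.mk_toType o
              _ ≤ ν.card := Ordinal.card_le_card hoν
              _ = #W := by rw [hν, Cardinal.card_ord]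
              _ < κ := hWcard
        obtain ⟨m, hm₁, hm₂⟩ := hmid
        refine ⟨m, ?_, hm₁, ?_⟩
        · intro o' h'
          exact hm₂ _ (hmemC₂ o' h')
        · intro o' h'
          have hsucc : o' + 1 < o := by
            rw [Ordinal.add_one_eq_succ]
            exact hlim.succ_lt h'
          have hIH := IH (o' + 1) hsucc (le_of_lt (lt_of_lt_of_le hsucc hoν))
          have : G (enumW o') (g (o' + 1)) := hIH.2.2 o' (by
            rw [Ordinal.add_one_eq_succ]
            exact Order.lt_succ_of_not_isMax (not_isMax o'))
          exact hGdc _ (hm₂ _ (hmemC₂ _ hsucc)) this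
    -- transfer the Spec to the actual value of `g`
    rw [hgeq o, hF]
    simp only
    rw [dif_pos hex]
    exact hex.choose_spec
  have hfin := hinv ν le_rfl
  refine ⟨g ν, hfin.2.1, ?_⟩
  intro w
  have := hfin.2.2 (rk w) (hrklt w)
  rwa [henum_rk w] at this

end LemmaB


/-! ### Part 7 : instance-wise characterization of realization, and cardinality bounds -/

section MainAux

variable {L : FirstOrder.Language.{0,0}} {I : Type} {D : Filter I} {N : Type} [L.Structure N]

/-- The instance of `q` at coordinate `i`. -/
noncomputable def instAt (D : Filter I) (q : FmlInst L 1 (RedPow D N)) (i : I) :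
    FmlInst L 1 N :=
  ⟨q.1, (q.2.1, fun k => rpo D (q.2.2 k) i)⟩

lemma realizesInst_iff (q : FmlInst L 1 (RedPow D N)) (hq : q.2.1.IsAtomic)
    (x : Fin 1 → RedPow D N) :
    RealizesInst x q ↔ ∀ᶠ i in D, RealizesInst ![rpo D (x 0) i] (instAt D q i) := by
  obtain ⟨m, φ, bb⟩ := q
  have h := rp_realize_atomic_iff (D := D) hq (Sum.elim x bb)
  refine h.trans (Filter.eventually_congr (Filter.Eventually.of_forall fun i => ?_))
  have : (fun k => rpo D (Sum.elim x bb k) i) =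
      Sum.elim ![rpo D (x 0) i] (fun k => rpo D (bb k) i) := by
    funext k
    rcases k with k | k
    · have : k = 0 := Subsingleton.elim k 0
      subst this
      simp [Matrix.cons_val_fin_one]
    · rfl
  rw [show φ.Realize (fun k => rpo D (Sum.elim x bb k) i) ↔
    RealizesInst ![rpo D (x 0) i] (instAt D (⟨m, (φ, bb)⟩ : FmlInst L 1 (RedPow D N)) i) from
    by rw [this]; rfl]

lemma fmlInst_card_le (hN : Nonempty N) :
    #(FmlInst L 1 N) ≤ #(List ((#N + L.card).ord.ToType)) := by
  have hA : #((#N + L.card).ord.ToType) = #N + L.card := Cardinal.mk_ord_toType _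
  have hAne : Nonempty ((#N + L.card).ord.ToType) := by
    rw [← Cardinal.mk_ne_zero_iff, hA]
    intro h
    rw [add_eq_zero] at h
    exact (Cardinal.mk_ne_zero_iff.2 hN) h.1
  rw [Cardinal.mk_list_eq_max_mk_aleph0, hA]
  have hbound : ∀ m : ℕ, #(L.Formula (Fin 1 ⊕ Fin m) × (Fin m → N)) ≤
      (ℵ₀ ⊔ L.card) * (ℵ₀ ⊔ #N) := by
    intro m
    rw [Cardinal.mk_prod, Cardinal.lift_id, Cardinal.lift_id]
    have h1 : #(L.Formula (Fin 1 ⊕ Fin m)) ≤ ℵ₀ ⊔ L.card := by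
      have hinj : #(L.Formula (Fin 1 ⊕ Fin m)) ≤
          #((n : ℕ) × L.BoundedFormula (Fin 1 ⊕ Fin m) n) :=
        Cardinal.mk_le_of_injective (f := fun φ => ⟨0, φ⟩)
          (fun φ ψ h => by simpa using h)
      refine hinj.trans ((Language.BoundedFormula.card_le).trans ?_)
      simp only [Cardinal.lift_id]
      have hlt : #(Fin 1 ⊕ Fin m) < ℵ₀ := by
        rw [Cardinal.mk_sum, Cardinal.mk_fin, Cardinal.mk_fin, Cardinal.lift_id,
          Cardinal.lift_id]
        exact Cardinal.add_lt_aleph0 (Cardinal.nat_lt_aleph0 1) (Cardinal.nat_lt_aleph0 m)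
      have h2 : #(Fin 1 ⊕ Fin m) + L.card ≤ ℵ₀ + L.card :=
        add_le_add_left hlt.le _
      refine (sup_le_sup_left h2 ℵ₀).trans ?_
      rw [Cardinal.add_eq_max le_rfl]
      rw [← sup_assoc, sup_idem]
    have h2 : #(Fin m → N) ≤ ℵ₀ ⊔ #N := by
      have he : #(Fin m → N) = #N ^ (m : Cardinal) := by
        rw [← Cardinal.mk_fin m]
        exact (Cardinal.power_def N (Fin m)).symm
      rw [he]
      calc #N ^ (m : Cardinal) ≤ (ℵ₀ ⊔ #N) ^ (m : Cardinal) :=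
            Cardinal.power_le_power_right le_sup_right
        _ ≤ ℵ₀ ⊔ #N := Cardinal.pow_le le_sup_left (Cardinal.nat_lt_aleph0 m)
    exact mul_le_mul' h1 h2
  have : #(FmlInst L 1 N) ≤ ℵ₀ * ((ℵ₀ ⊔ L.card) * (ℵ₀ ⊔ #N)) := by
    rw [Cardinal.mk_sigma]
    calc (Cardinal.sum fun m : ℕ => #(L.Formula (Fin 1 ⊕ Fin m) × (Fin m → N)))
        ≤ Cardinal.sum fun _ : ℕ => (ℵ₀ ⊔ L.card) * (ℵ₀ ⊔ #N) :=
          Cardinal.sum_le_sum _ _ hbound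
      _ = ℵ₀ * ((ℵ₀ ⊔ L.card) * (ℵ₀ ⊔ #N)) := by
          rw [Cardinal.sum_const, Cardinal.lift_id, Cardinal.lift_id, Cardinal.mk_nat]
  refine this.trans ?_
  have hmul : ℵ₀ * ((ℵ₀ ⊔ L.card) * (ℵ₀ ⊔ #N)) = ℵ₀ ⊔ L.card ⊔ #N := by
    rw [Cardinal.mul_eq_max le_sup_left le_sup_left,
      Cardinal.mul_eq_max le_rfl (le_sup_left.trans le_sup_left)]
    have : ∀ x y z : Cardinal, x ⊔ (x ⊔ y ⊔ (x ⊔ z)) = x ⊔ y ⊔ z := fun x y z => by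
      rw [sup_sup_sup_comm x y x z, sup_idem, sup_left_idem, ← sup_assoc]
    exact this ℵ₀ L.card #N
  rw [hmul]
  refine sup_le (sup_le le_sup_right ?_) ?_
  · exact le_sup_of_le_left (self_le_add_left _ _)
  · exact le_sup_of_le_left (self_le_add_right _ _)

end MainAux

/-- Let `D` be a filter on `I`, `N` a structure, `λ = ‖N‖ + |τ(N)|`, `Δ` the
atomic formulas, `𝒯 = (^{ω>}λ, ⊴)^I/D` and `κ = min{𝔱(𝒯), 𝔭(𝒯)}`.  Then `N^I/D` is
`(κ,1,Δ)`-saturated. -/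
theorem redPow_atomically_saturated {L : FirstOrder.Language.{0, 0}} {I : Type}
    (D : Filter I) (N : Type) [L.Structure N] :
    AtomSaturated (L := L)
      (min
        (tCard (rpLiftRel D fun _ : I =>
          ((· <+: ·) : List ((#N + L.card).ord.ToType) → List ((#N + L.card).ord.ToType) → Prop)))
        (pCard (rpLiftRel D fun _ : I =>
          ((· <+: ·) : List ((#N + L.card).ord.ToType) → List ((#N + L.card).ord.ToType) → Prop))))
      (RedPow D N) := by
  classical
  intro p hΔ hcard hs
  set AN := ((#N + L.card).ord.ToType) with hANdef
  set tle := rpLiftRel D fun _ : I =>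
    ((· <+: ·) : List AN → List AN → Prop) with htledef
  set κ := min (tCard tle) (pCard tle) with hκdef
  -- Case: the filter is trivial
  by_cases hDB : D.NeBot
  swap
  · exfalso
    rw [Filter.not_neBot] at hDB
    subst hDB
    have htz : tCard tle = 0 := by
      have hempty : {κ' : Cardinal | ℵ₀ ≤ κ' ∧ ∃ f : κ'.ord.ToType → RedPow ⊥ (List AN),
          (∀ i j, i < j → tle (f i) (f j) ∧ ¬ tle (f j) (f i)) ∧
          ¬ ∃ ub, ∀ i, tle (f i) ub} = ∅ := by
        ext κ'
        simp only [Set.mem_empty_iff_false, iff_false, Set.mem_setOf_eq, not_and]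
        intro hκ'
        rintro ⟨f, hstrict, -⟩
        have hinf : Infinite κ'.ord.ToType := by
          rw [← Cardinal.aleph0_le_mk_iff, Cardinal.mk_ord_toType]
          exact hκ'
        obtain ⟨i, j, hij⟩ := exists_pair_ne κ'.ord.ToType
        rcases hij.lt_or_gt with h | h
        · exact (hstrict i j h).2 Filter.eventually_bot
        · exact (hstrict j i h).2 Filter.eventually_bot
      unfold tCard
      rw [hempty]
      simp
    have : κ = 0 := by
      rw [hκdef, htz]
      exact le_antisymm (min_le_left _ _ |>.trans_eq rfl) zero_le
    rw [this] at hcard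
    exact (zero_le : (0 : Cardinal) ≤ #(↥p)).not_gt hcard
  haveI := hDB
  haveI : Nonempty I := Filter.nonempty_of_neBot D
  obtain ⟨x₀, -⟩ := hs ∅ (Set.empty_subset _) Set.finite_empty
  haveI hNne : Nonempty N := ⟨rpo D (x₀ 0) (Classical.arbitrary I)⟩
  -- Case: `p` is finite
  by_cases hpfin : #(↥p) < ℵ₀
  · exact hs p subset_rfl (Set.finite_coe_iff.1 (Cardinal.lt_aleph0_iff_finite.1 hpfin))
  have hμ : ℵ₀ ≤ #(↥p) := not_lt.1 hpfin
  -- Case: the alphabet is trivial (`N` a singleton, no symbols)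
  by_cases h2 : 2 ≤ #AN
  swap
  · have hA : #AN = #N + L.card := Cardinal.mk_ord_toType _
    have hN1 : 1 ≤ #N := Cardinal.one_le_iff_ne_zero.2 (Cardinal.mk_ne_zero_iff.2 hNne)
    have hA1 : #AN ≤ 1 := by
      refine Cardinal.le_one_iff_subsingleton.2 ?_
      rw [← not_nontrivial_iff_subsingleton]
      intro hnt
      exact h2 (Cardinal.two_le_iff.2 (exists_pair_ne _))
    have hNN1 : #N = 1 := by
      refine le_antisymm ?_ hN1
      have := hA1
      rw [hA] at this
      exact (self_le_add_right #N L.card).trans this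
    have hL0 : L.card = 0 := by
      by_contra hl
      have h1L : 1 ≤ L.card := Cardinal.one_le_iff_ne_zero.2 hl
      have h21 : (2 : Cardinal) ≤ 1 := by
        calc (2 : Cardinal) = 1 + 1 := by norm_num
          _ ≤ #N + L.card := add_le_add hN1 h1L
          _ = #AN := hA.symm
          _ ≤ 1 := hA1
      norm_num at h21
    haveI hNsub : Subsingleton N := Cardinal.le_one_iff_subsingleton.1 hNN1.le
    haveI hRsub : Subsingleton (RedPow D N) := by
      constructor
      intro x y
      refine Quotient.inductionOn₂ x y fun f g => Quotient.sound ?_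
      exact Filter.Eventually.of_forall fun i => Subsingleton.elim _ _
    refine ⟨x₀, fun q hq => ?_⟩
    have hat : q.2.1.IsAtomic := hΔ q hq
    obtain ⟨m, φ, bb⟩ := q
    have hat' : φ.IsAtomic := hat
    clear hat hq
    cases hat' with
    | equal t₁ t₂ =>
      show Language.BoundedFormula.Realize _ _ _
      rw [Language.BoundedFormula.realize_bdEqual]
      exact Subsingleton.elim _ _
    | rel R ts =>
      exfalso
      have : IsEmpty L.Symbols := Cardinal.mk_eq_zero_iff.1 hL0
      exact this.elim (Sum.inr ⟨_, R⟩)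
  -- MAIN CASE
  obtain ⟨la, lb, hab⟩ := Cardinal.two_le_iff.1 h2
  obtain ⟨codeF⟩ := (Cardinal.le_def _ _).1 (fmlInst_card_le (L := L) hNne)
  -- abbreviations
  set dct : RedPow D (List AN) → I → List (FmlInst L 1 N) :=
    fun t i => dec la lb codeF (rpo D t i) [] with hdct
  set Gw : Finset (↥p) → RedPow D (List AN) → Prop := fun w t => ∀ᶠ i in D,
    ∃ x : N, (∀ c ∈ dct t i, RealizesInst ![x] c) ∧
      (∀ q ∈ w, RealizesInst ![x] (instAt D (q : ↥p).1 i)) with hGwdef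
  set CL : RedPow D (List AN) → Prop := fun t => ∀ᶠ i in D,
    rpo D t i = blocksOf la lb codeF (dct t i) with hCLdef
  -- order facts
  have tle_refl : ∀ t, tle t t := fun t =>
    rpLiftRel_refl _ (fun l => List.prefix_refl l) t
  have tle_trans : ∀ {x y z}, tle x y → tle y z → tle x z := fun h1 h2 =>
    rpLiftRel_trans _ (fun hx hy => hx.trans hy) h1 h2
  have hκinf : ℵ₀ ≤ κ := hμ.trans hcard.le
  have hprecut : ∀ κ₁ κ₂ : Cardinal, κ₁.IsRegular → κ₂.IsRegular →
      HasPreCut tle κ₁ κ₂ → κ ≤ κ₁ + κ₂ := by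
    intro κ₁ κ₂ hr1 hr2 hpc
    have hple : pCard tle ≤ κ₁ + κ₂ := by
      unfold pCard
      exact csInf_le' ⟨κ₁, κ₂, hr1, hr2, hpc, rfl⟩
    exact (min_le_right _ _).trans hple
  have htree : ∀ θ : Cardinal, ℵ₀ ≤ θ → θ < κ →
      ∀ f : θ.ord.ToType → RedPow D (List AN),
      (∀ i j, i < j → tle (f i) (f j) ∧ ¬ tle (f j) (f i)) → ∃ ub, ∀ i, tle (f i) ub := by
    intro θ hθ hθκ f hstrict
    by_contra hub
    have : tCard tle ≤ θ := by
      unfold tCard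
      exact csInf_le' ⟨hθ, f, hstrict, hub⟩
    exact absurd ((hθκ.trans_le (min_le_left _ _)).trans_le this) (lt_irrefl θ)
  -- atomic Łoś instances
  have hatomic : ∀ q : ↥p, (q : FmlInst L 1 (RedPow D N)).2.1.IsAtomic :=
    fun q => hΔ q.1 q.2
  have hFS : ∀ w : Finset ↥p, ∀ᶠ i in D,
      ∃ x : N, ∀ q ∈ w, RealizesInst ![x] (instAt D (q : ↥p).1 i) := by
    intro w
    obtain ⟨xw, hxw⟩ := hs (Subtype.val '' (w : Set ↥p))
      (by rintro _ ⟨q, -, rfl⟩; exact q.2) (((w : Set ↥p).toFinite).image _)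
    have hall : ∀ q ∈ w, ∀ᶠ i in D, RealizesInst ![rpo D (xw 0) i] (instAt D (q:↥p).1 i) := by
      intro q hq
      have hr : RealizesInst xw (q : ↥p).1 :=
        hxw (q : ↥p).1 ⟨q, Finset.mem_coe.2 hq, rfl⟩
      exact (realizesInst_iff (q : ↥p).1 (hatomic q) xw).1 hr
    exact ((Filter.eventually_all_finset w).2 hall).mono fun i hi => ⟨rpo D (xw 0) i, hi⟩
  have hLB : ∀ (q : ↥p) (f : I → N),
      (∀ᶠ i in D, RealizesInst ![f i] (instAt D (q : ↥p).1 i)) →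
      RealizesInst ![rpmk D f] (q : ↥p).1 := by
    intro q f hf
    apply (realizesInst_iff (q : ↥p).1 (hatomic q) ![rpmk D f]).2
    filter_upwards [hf, rpo_rpmk (D := D) f] with i h1 h2
    have : rpo D (![rpmk D f] 0) i = f i := h2
    rw [this]
    exact h1
  -- decoding facts
  have hdc_bof : ∀ Lw, dec la lb codeF (blocksOf la lb codeF Lw) [] = Lw :=
    fun Lw => dec_blocksOf la lb codeF hab Lw
  have hdc_mono : ∀ {l1 l2 : List AN}, l1 <+: l2 →
      dec la lb codeF l1 [] <+: dec la lb codeF l2 [] :=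
    fun h => dec_prefix la lb codeF h []
  have hdcnil : dec la lb codeF ([] : List AN) [] = [] := by simp [dec]
  have hGdc : ∀ (w : Finset ↥p) {x y}, tle x y → Gw w y → Gw w x := by
    intro w x y hxy hGy
    filter_upwards [hxy, hGy] with i h1 h2
    obtain ⟨z, hz1, hz2⟩ := h2
    exact ⟨z, fun c hc => hz1 c (List.IsPrefix.mem hc (hdc_mono h1)), hz2⟩
  -- the root of the construction
  have hroot : CL (rpmk D fun _ => ([] : List AN)) ∧
      ∀ w, Gw w (rpmk D fun _ => ([] : List AN)) := by
    constructor
    · filter_upwards [rpo_rpmk (D := D) (fun _ => ([] : List AN))] with i hi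
      show rpo D _ i = blocksOf la lb codeF (dec la lb codeF (rpo D _ i) []) 
      rw [hi, hdcnil]
      rfl
    · intro w
      filter_upwards [hFS w, rpo_rpmk (D := D) (fun _ => ([] : List AN))] with i h1 h2
      obtain ⟨x, hx⟩ := h1
      refine ⟨x, fun c hc => ?_, hx⟩
      exfalso
      have : dct (rpmk D fun _ => ([] : List AN)) i = [] := by
        show dec la lb codeF (rpo D _ i) [] = []
        rw [h2, hdcnil]
      rw [this] at hc
      exact List.not_mem_nil hc
  haveI : Nonempty (RedPow D (List AN)) := ⟨rpmk D fun _ => []⟩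
  -- appending an instance to a chain element
  have happly : ∀ t (q : ↥p), CL t → (∀ w, Gw w t) →
      ∃ t', tle t t' ∧ ¬ tle t' t ∧ CL t' ∧ (∀ w, Gw w t') ∧
        (∀ᶠ i in D, instAt D (q : ↥p).1 i ∈ dct t' i) ∧
        (∀ c : I → FmlInst L 1 N,
          (∀ᶠ i in D, c i ∈ dct t i) → (∀ᶠ i in D, c i ∈ dct t' i)) := by
    intro t q hCLt hGt
    set g : I → List AN := fun i =>
      if (∃ x : N, (∀ c ∈ dct t i, RealizesInst ![x] c) ∧
          RealizesInst ![x] (instAt D (q : ↥p).1 i))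
      then blocksOf la lb codeF (dct t i ++ [instAt D (q : ↥p).1 i])
      else blocksOf la lb codeF (dct t i) with hgdef
    have hg := rpo_rpmk (D := D) g
    have hok : ∀ᶠ i in D, ∃ x : N, (∀ c ∈ dct t i, RealizesInst ![x] c) ∧
        RealizesInst ![x] (instAt D (q : ↥p).1 i) := by
      filter_upwards [hGt {q}] with i hi
      obtain ⟨x, hx1, hx2⟩ := hi
      exact ⟨x, hx1, hx2 q (Finset.mem_singleton_self q)⟩
    have h_new : ∀ᶠ i in D, dct (rpmk D g) i = dct t i ++ [instAt D (q : ↥p).1 i] := by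
      filter_upwards [hg, hok] with i h1 h2
      show dec la lb codeF (rpo D (rpmk D g) i) [] = _
      rw [h1, hgdef]
      simp only [if_pos h2]
      exact hdc_bof _
    refine ⟨rpmk D g, ?_, ?_, ?_, ?_, ?_, ?_⟩
    · filter_upwards [hg, hCLt, hok] with i h1 h2 h3
      show rpo D t i <+: rpo D (rpmk D g) i
      rw [h1, h2, hgdef]
      simp only [if_pos h3]
      exact blocksOf_prefix la lb codeF (List.prefix_append _ _)
    · intro hcon
      obtain ⟨i, hpre, h1, h2, h3⟩ := (hcon.and (hg.and (hCLt.and hok))).exists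
      have hpre' : rpo D (rpmk D g) i <+: rpo D t i := hpre
      rw [h1, h2, hgdef] at hpre'
      simp only [if_pos h3] at hpre'
      have hlen := hpre'.length_le
      rw [blocksOf_append, List.length_append] at hlen
      have hbl : 0 < (blocksOf la lb codeF [instAt D (q : ↥p).1 i]).length := by
        simp [blocksOf, block]
      omega
    · filter_upwards [hg] with i h1
      show rpo D (rpmk D g) i = blocksOf la lb codeF (dec la lb codeF (rpo D (rpmk D g) i) [])
      rw [h1, hgdef]
      by_cases hc : (∃ x : N, (∀ c ∈ dct t i, RealizesInst ![x] c) ∧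
          RealizesInst ![x] (instAt D (q : ↥p).1 i))
      · simp only [if_pos hc]
        rw [hdc_bof]
      · simp only [if_neg hc]
        rw [hdc_bof]
    · intro w
      filter_upwards [hGt (insert q w), h_new] with i h1 h2
      obtain ⟨x, hx1, hx2⟩ := h1
      refine ⟨x, ?_, fun q' hq' => hx2 q' (Finset.mem_insert_of_mem hq')⟩
      intro c hc
      rw [h2] at hc
      rcases List.mem_append.1 hc with hc | hc
      · exact hx1 c hc
      · rw [List.mem_singleton.1 hc]
        exact hx2 q (Finset.mem_insert_self q w)
    · filter_upwards [h_new] with i h1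
      rw [h1]
      exact List.mem_append.2 (Or.inr (List.mem_singleton.2 rfl))
    · intro c hc
      filter_upwards [h_new, hc] with i h1 h2
      rw [h1]
      exact List.mem_append.2 (Or.inl h2)
  -- pruning below an upper bound
  have hprune : ∀ (w : Finset ↥p) (s : RedPow D (List AN)),
      ∃ s', tle s' s ∧ (∀ t, CL t → Gw w t → tle t s → tle t s') ∧ Gw w s' ∧ CL s' := by
    intro w s
    set Good : I → List AN → Prop := fun i l => ∃ Lw, l = blocksOf la lb codeF Lw ∧
      ∃ x : N, (∀ c ∈ Lw, RealizesInst ![x] c) ∧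
        (∀ q ∈ w, RealizesInst ![x] (instAt D (q : ↥p).1 i)) with hGood
    set g : I → List AN := fun i =>
      (((rpo D s i).inits.filter (fun l => Good i l)).argmax List.length).getD [] with hgdef
    have hg := rpo_rpmk (D := D) g
    have hgpre : ∀ i, g i <+: rpo D s i := by
      intro i
      rw [hgdef]
      simp only
      cases hm : ((rpo D s i).inits.filter (fun l => Good i l)).argmax List.length with
      | none => simp only [Option.getD_none]; exact List.nil_prefix
      | some m =>
        simp only [Option.getD_some]
        have hmem := List.argmax_mem (Option.mem_def.2 hm)
        rw [List.mem_filter] at hmem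
        exact (List.mem_inits _ _).1 hmem.1
    have hgprop : ∀ i, (∃ l, l <+: rpo D s i ∧ Good i l) →
        Good i (g i) ∧ (∀ l, l <+: rpo D s i → Good i l → l.length ≤ (g i).length) := by
      rintro i ⟨l₀, hp₀, hg₀⟩
      have hl₀ : l₀ ∈ (rpo D s i).inits.filter (fun l => Good i l) := by
        rw [List.mem_filter]
        exact ⟨(List.mem_inits _ _).2 hp₀, by simp [hg₀]⟩
      cases hm : ((rpo D s i).inits.filter (fun l => Good i l)).argmax List.length with
      | none =>
        rw [List.argmax_eq_none.1 hm] at hl₀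
        exact absurd hl₀ List.not_mem_nil
      | some m =>
        have hgi : g i = m := by rw [hgdef]; simp only [hm, Option.getD_some]
        have hmem := List.argmax_mem (Option.mem_def.2 hm)
        rw [List.mem_filter] at hmem
        constructor
        · rw [hgi]
          have := hmem.2
          simpa using this
        · intro l hlp hlg
          have hlmem : l ∈ (rpo D s i).inits.filter (fun l => Good i l) := by
            rw [List.mem_filter]
            exact ⟨(List.mem_inits _ _).2 hlp, by simp [hlg]⟩
          rw [hgi]
          exact List.le_of_mem_argmax hlmem (Option.mem_def.2 hm)
    have hgbof : ∀ i, ∃ Lw, g i = blocksOf la lb codeF Lw := by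
      intro i
      rw [hgdef]
      simp only
      cases hm : ((rpo D s i).inits.filter (fun l => Good i l)).argmax List.length with
      | none =>
        refine ⟨[], ?_⟩
        simp only [Option.getD_none]
        rfl
      | some m =>
        simp only [Option.getD_some]
        have hmem := List.argmax_mem (Option.mem_def.2 hm)
        rw [List.mem_filter] at hmem
        have : Good i m := by simpa using hmem.2
        obtain ⟨Lw, hLw, -⟩ := this
        exact ⟨Lw, hLw⟩
    refine ⟨rpmk D g, ?_, ?_, ?_, ?_⟩
    · filter_upwards [hg] with i h1
      show rpo D (rpmk D g) i <+: rpo D s i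
      rw [h1]
      exact hgpre i
    · intro t hCLt hGwt htles
      filter_upwards [hg, hCLt, hGwt, htles] with i h1 h2 h3 h4
      have h4' : rpo D t i <+: rpo D s i := h4
      obtain ⟨x, hx1, hx2⟩ := h3
      have hGoodt : Good i (rpo D t i) := ⟨dct t i, h2, x, hx1, hx2⟩
      have hprops := hgprop i ⟨rpo D t i, h4', hGoodt⟩
      show rpo D t i <+: rpo D (rpmk D g) i
      rw [h1]
      exact List.prefix_of_prefix_length_le h4' (hgpre i) (hprops.2 _ h4' hGoodt)
    · filter_upwards [hg, hFS w] with i h1 h2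
      obtain ⟨x, hx⟩ := h2
      have hGoodnil : Good i [] := ⟨[], rfl, x, by simp, hx⟩
      have hprops := hgprop i ⟨[], List.nil_prefix, hGoodnil⟩
      obtain ⟨Lw, hLw, y, hy1, hy2⟩ := hprops.1
      refine ⟨y, ?_, hy2⟩
      intro c hc
      have hceq : dct (rpmk D g) i = Lw := by
        show dec la lb codeF (rpo D (rpmk D g) i) [] = Lw
        rw [h1, hLw, hdc_bof]
      rw [hceq] at hc
      exact hy1 c hc
    · filter_upwards [hg] with i h1
      show rpo D (rpmk D g) i =
        blocksOf la lb codeF (dec la lb codeF (rpo D (rpmk D g) i) [])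
      rw [h1]
      obtain ⟨Lw, hLw⟩ := hgbof i
      rw [hLw, hdc_bof]
  -- enumeration of `p`
  haveI : Infinite ↥p := Cardinal.aleph0_le_mk_iff.1 hμ
  set μo : Ordinal := (#(↥p)).ord with hμodef
  have hμott : #(μo.ToType) = #(↥p) := Cardinal.mk_ord_toType _
  obtain ⟨ep⟩ := Cardinal.eq.1 hμott
  set qAt : Ordinal → ↥p := fun o =>
    if h : o < μo then ep ((Ordinal.ToType.mk (o := μo)) ⟨o, h⟩) else Classical.arbitrary ↥p
    with hqAt
  set rkp : ↥p → Ordinal := fun q => (((Ordinal.ToType.mk (o := μo)).symm (ep.symm q)) : Ordinal)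
    with hrkp
  have hrkplt : ∀ q, rkp q < μo := fun q => ((Ordinal.ToType.mk (o := μo)).symm (ep.symm q)).2
  have hqAt_rkp : ∀ q, qAt (rkp q) = q := by
    intro q
    have h := hrkplt q
    simp only [hqAt, dif_pos h]
    have : (⟨rkp q, h⟩ : Set.Iio μo) = (Ordinal.ToType.mk (o := μo)).symm (ep.symm q) :=
      Subtype.ext rfl
    rw [this]
    simp
  have hWcard : #(Finset ↥p) < κ := by
    rw [Cardinal.mk_finset_of_infinite]
    exact hcard
  -- the main recursion
  set SpecM : ∀ (o : Ordinal), (∀ o' : Ordinal, o' < o → RedPow D (List AN)) →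
      RedPow D (List AN) → Prop := fun o ih x =>
    (∀ o' (h' : o' < o), tle (ih o' h') x ∧ ¬ tle x (ih o' h')) ∧ CL x ∧ (∀ w, Gw w x) ∧
      (∀ o' (_ : o' < o), ∀ᶠ i in D, instAt D (qAt o' : ↥p).1 i ∈ dct x i) with hSpecM
  set FM : ∀ o : Ordinal, (∀ o' : Ordinal, o' < o → RedPow D (List AN)) → RedPow D (List AN) :=
    fun o ih => if h : ∃ x, SpecM o ih x then h.choose else rpmk D fun _ => [] with hFM
  set gM : Ordinal → RedPow D (List AN) := ordRec FM with hgMdef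
  have hgMeq : ∀ o, gM o = FM o (fun o' _ => gM o') := fun o => ordRec_eq FM o
  have hinvM : ∀ o : Ordinal, o ≤ μo → SpecM o (fun o' _ => gM o') (gM o) := by
    intro o
    induction o using Ordinal.induction with
    | _ o IH => ?_
    intro hoμ
    have hex : ∃ x, SpecM o (fun o' _ => gM o') x := by
      rcases Ordinal.zero_or_succ_or_isSuccLimit o with rfl | ⟨o', rfl⟩ | hlim
      · exact ⟨rpmk D fun _ => [], fun o' h' => absurd h' (zero_le : (0 : Ordinal) ≤ o').not_gt,
          hroot.1, hroot.2, fun o' h' => absurd h' (zero_le : (0 : Ordinal) ≤ o').not_gt⟩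
      · -- successor step
        have ho' : o' < Order.succ o' := Order.lt_succ_of_not_isMax (not_isMax o')
        have hIH := IH o' ho' (le_of_lt (lt_of_lt_of_le ho' hoμ))
        obtain ⟨t', ht1, ht2, ht3, ht4, ht5, ht6⟩ :=
          happly (gM o') (qAt o') hIH.2.1 hIH.2.2.1
        refine ⟨t', ?_, ht3, ht4, ?_⟩
        · intro o'' h''
          rcases lt_or_eq_of_le (Order.lt_succ_iff.1 h'') with h | rfl
          · exact ⟨tle_trans (hIH.1 o'' h).1 ht1,
              fun hcon => (hIH.1 o'' h).2 (tle_trans ht1 hcon)⟩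
          · exact ⟨ht1, ht2⟩
        · intro o'' h''
          rcases lt_or_eq_of_le (Order.lt_succ_iff.1 h'') with h | rfl
          · exact ht6 _ (hIH.2.2.2 o'' h)
          · exact ht5
      · -- limit step
        have hθinf : ℵ₀ ≤ o.cof := Ordinal.aleph0_le_cof.2 hlim
        have hθκ : o.cof < κ := by
          have h1 : o.cof ≤ o.card := Ordinal.cof_le_card o
          have h2 : o.card ≤ μo.card := Ordinal.card_le_card hoμ
          have h3 : μo.card = #(↥p) := Cardinal.card_ord _
          exact lt_of_le_of_lt (h1.trans (h2.trans_eq h3)) hcard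
        obtain ⟨fo, hfo⟩ := Ordinal.exists_fundamental_sequence o
        obtain ⟨-, hfomono, hfoblsub⟩ := hfo
        have hfolt : ∀ b (hb : b < o.cof.ord), fo b hb < o := by
          intro b hb
          rw [← hfoblsub]
          exact Ordinal.lt_blsub fo b hb
        set FT : o.cof.ord.ToType → RedPow D (List AN) := fun x =>
          gM (fo (((Ordinal.ToType.mk (o := o.cof.ord)).symm x) : Ordinal)
            ((Ordinal.ToType.mk (o := o.cof.ord)).symm x).2) with hFT
        have hFTstrict : ∀ x y, x < y → tle (FT x) (FT y) ∧ ¬ tle (FT y) (FT x) := by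
          intro x y hxy
          have hxy' : (((Ordinal.ToType.mk (o := o.cof.ord)).symm x) : Ordinal) <
              (((Ordinal.ToType.mk (o := o.cof.ord)).symm y) : Ordinal) :=
            Subtype.coe_lt_coe.2 ((Ordinal.ToType.mk (o := o.cof.ord)).symm.lt_iff_lt.2 hxy)
          have hlt := hfomono ((Ordinal.ToType.mk (o := o.cof.ord)).symm x).2
            ((Ordinal.ToType.mk (o := o.cof.ord)).symm y).2 hxy'
          have hylt : (((Ordinal.ToType.mk (o := o.cof.ord)).symm y) : Ordinal) < o.cof.ord :=
            ((Ordinal.ToType.mk (o := o.cof.ord)).symm y).2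
          have hIHy := IH _ (hfolt _ hylt) (le_of_lt (lt_of_lt_of_le (hfolt _ hylt) hoμ))
          exact hIHy.1 _ hlt
        obtain ⟨u₀, hu₀⟩ := htree o.cof hθinf hθκ FT hFTstrict
        have hu₀all : ∀ o' (h' : o' < o), tle (gM o') u₀ := by
          intro o' h'
          have h'b : o' < Ordinal.blsub o.cof.ord fo := by rw [hfoblsub]; exact h'
          obtain ⟨b, hb, hble⟩ := Ordinal.lt_blsub_iff.1 h'b
          have hBound : tle (gM (fo b hb)) u₀ := by
            have := hu₀ ((Ordinal.ToType.mk (o := o.cof.ord)) ⟨b, hb⟩)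
            simpa [hFT, OrderIso.symm_apply_apply] using this
          rcases lt_or_eq_of_le hble with h | rfl
          · have hIHb := IH (fo b hb) (hfolt b hb)
              (le_of_lt (lt_of_lt_of_le (hfolt b hb) hoμ))
            exact tle_trans (hIHb.1 o' h).1 hBound
          · exact hBound
        -- the chain so far
        set Ch : Set (RedPow D (List AN)) := Set.range (fun x : o.ToType =>
          gM (((Ordinal.ToType.mk (o := o)).symm x) : Ordinal)) with hCh
        have hChmem : ∀ y ∈ Ch, ∃ o', o' < o ∧ y = gM o' := by
          rintro y ⟨x, rfl⟩
          exact ⟨_, ((Ordinal.ToType.mk (o := o)).symm x).2, rfl⟩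
        have hmemCh : ∀ o' (h' : o' < o), gM o' ∈ Ch := by
          intro o' h'
          refine ⟨(Ordinal.ToType.mk (o := o)) ⟨o', h'⟩, ?_⟩
          simp [OrderIso.symm_apply_apply]
        have hglel : ∀ o₁ o₂ : Ordinal, o₁ ≤ o₂ → o₂ < o → tle (gM o₁) (gM o₂) := by
          intro o₁ o₂ h12 h2o
          rcases lt_or_eq_of_le h12 with h | rfl
          · exact ((IH o₂ h2o (le_of_lt (lt_of_lt_of_le h2o hoμ))).1 o₁ h).1
          · exact tle_refl _
        have hChne : Ch.Nonempty := ⟨gM 0, hmemCh 0 hlim.pos⟩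
        have hChlin : ∀ x ∈ Ch, ∀ y ∈ Ch, tle x y ∨ tle y x := by
          intro x hx y hy
          obtain ⟨o₁, h₁, rfl⟩ := hChmem x hx
          obtain ⟨o₂, h₂, rfl⟩ := hChmem y hy
          rcases le_total o₁ o₂ with h | h
          · exact Or.inl (hglel o₁ o₂ h h₂)
          · exact Or.inr (hglel o₂ o₁ h h₁)
        have hChcard : #Ch < κ := by
          calc #Ch ≤ #(o.ToType) := Cardinal.mk_range_le
            _ = o.card := Cardinal.mk_toType o
            _ ≤ μo.card := Ordinal.card_le_card hoμ
            _ = #(↥p) := Cardinal.card_ord _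
            _ < κ := hcard
        have hChCL : ∀ c ∈ Ch, CL c ∧ (∀ w, Gw w c) := by
          intro c hc
          obtain ⟨o', h', rfl⟩ := hChmem c hc
          have hIH := IH o' h' (le_of_lt (lt_of_lt_of_le h' hoμ))
          exact ⟨hIH.2.1, hIH.2.2.1⟩
        have hu₀Ch : ∀ c ∈ Ch, tle c u₀ := by
          intro c hc
          obtain ⟨o', h', rfl⟩ := hChmem c hc
          exact hu₀all o' h'
        have hpruneB : ∀ (w : Finset ↥p) (sB : RedPow D (List AN)),
            (∀ c ∈ Ch, tle c sB) →
            ∃ s', tle s' sB ∧ (∀ c ∈ Ch, tle c s') ∧ Gw w s' := by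
          intro w sB hub
          obtain ⟨s', h1, h2, h3, h4⟩ := hprune w sB
          refine ⟨s', h1, ?_, h3⟩
          intro c hc
          exact h2 c (hChCL c hc).1 ((hChCL c hc).2 w) (hub c hc)
        obtain ⟨sB, hsBub, hsBG⟩ := exists_fully_good_ub (le := tle) tle_refl
          (fun {x y z} => tle_trans) hκinf hprecut hChne hChlin hChcard hWcard Gw
          (fun w {x y} => hGdc w) u₀ hu₀Ch hpruneB
        obtain ⟨x', hx1, hx2, hx3, hx4⟩ := hprune ∅ sB
        have hchainle : ∀ o' (h' : o' < o), tle (gM o') x' := by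
          intro o' h'
          have hIH := IH o' h' (le_of_lt (lt_of_lt_of_le h' hoμ))
          exact hx2 (gM o') hIH.2.1 (hIH.2.2.1 ∅) (hsBub _ (hmemCh o' h'))
        refine ⟨x', ?_, hx4, fun w => hGdc w hx1 (hsBG w), ?_⟩
        · intro o' h'
          refine ⟨hchainle o' h', ?_⟩
          intro hcon
          have hsucc : o' + 1 < o := by
            rw [Ordinal.add_one_eq_succ]
            exact hlim.succ_lt h'
          have hIH1 := IH (o' + 1) hsucc (le_of_lt (lt_of_lt_of_le hsucc hoμ))
          have h1 : tle (gM (o' + 1)) x' := hchainle _ hsucc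
          have ho'succ : o' < o' + 1 := by
            rw [Ordinal.add_one_eq_succ]
            exact Order.lt_succ_of_not_isMax (not_isMax o')
          exact (hIH1.1 o' ho'succ).2 (tle_trans h1 hcon)
        · intro o' h'
          have hsucc : o' + 1 < o := by
            rw [Ordinal.add_one_eq_succ]
            exact hlim.succ_lt h'
          have hIH1 := IH (o' + 1) hsucc (le_of_lt (lt_of_lt_of_le hsucc hoμ))
          have ho'succ : o' < o' + 1 := by
            rw [Ordinal.add_one_eq_succ]
            exact Order.lt_succ_of_not_isMax (not_isMax o')
          have hmem := hIH1.2.2.2 o' ho'succ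
          have hle : tle (gM (o' + 1)) x' := hchainle _ hsucc
          filter_upwards [hmem, hle] with i h1 h2
          exact List.IsPrefix.mem h1 (hdc_mono h2)
    rw [hgMeq o, hFM]
    simp only
    rw [dif_pos hex]
    exact hex.choose_spec
  -- extraction of the realizing element
  have hfinM := hinvM μo le_rfl
  set f : I → N := fun i =>
    if h : ∃ x : N, ∀ c ∈ dct (gM μo) i, RealizesInst ![x] c then h.choose
    else Classical.arbitrary N with hf
  refine ⟨![rpmk D f], fun q hq => ?_⟩
  have hql : rkp ⟨q, hq⟩ < μo := hrkplt _
  have hmemq := hfinM.2.2.2 (rkp ⟨q, hq⟩) hql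
  rw [hqAt_rkp ⟨q, hq⟩] at hmemq
  have hGe := hfinM.2.2.1 ∅
  have hsat : ∀ᶠ i in D, RealizesInst ![f i] (instAt D ((⟨q, hq⟩ : ↥p) : FmlInst L 1 (RedPow D N)) i) := by
    filter_upwards [hmemq, hGe] with i h1 h2
    obtain ⟨x, hx, -⟩ := h2
    have hex : ∃ x : N, ∀ c ∈ dct (gM μo) i, RealizesInst ![x] c := ⟨x, hx⟩
    have hfi : f i = hex.choose := by rw [hf]; simp only [dif_pos hex]
    rw [hfi]
    exact hex.choose_spec _ h1
  exact hLB ⟨q, hq⟩ f hsat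

end Shelah1064
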